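/- Let ρ : ℝ^d → ℝ be convex and positively homogeneous of degree one, and suppose ρ satisfies the monotonicity property: for every pair q, r ∈ ℝ^d such that for each coordinate j = 1,…,d either 0 ≤ r_j ≤ q_j or (q_j ≤ r_j and r_j = 0), one has ρ(r) ≤ ρ(q). Let 𝒫 = {z ∈ ℝ^d : z·q ≤ ρ(q) for all q ∈ ℝ^d}. Then for every p ∈ 𝒫, the componentwise positive part p₊ = max(p, 0) also belongs to 𝒫. -/

import Mathlib

open scoped RealInnerProductSpace

/-- if the convex, positively one-homogeneous grid cost `ρ` satisfies the
coordinatewise monotonicity property, then the dual set `𝒫` is closed under taking the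
componentwise positive part: `p ∈ 𝒫 → p₊ ∈ 𝒫`. -/
theorem dual_set_closed_under_pos_part (d : ℕ) (ρ : EuclideanSpace ℝ (Fin d) → ℝ)
    (hconv : ConvexOn ℝ Set.univ ρ)
    (hhom : ∀ α : ℝ, 0 ≤ α → ∀ q, ρ (α • q) = α * ρ q)
    (hmono : ∀ q r : EuclideanSpace ℝ (Fin d),
      (∀ j, (0 ≤ r j ∧ r j ≤ q j) ∨ (q j ≤ r j ∧ r j = 0)) → ρ r ≤ ρ q)
    (p : EuclideanSpace ℝ (Fin d)) (hp : ∀ q, ⟪p, q⟫ ≤ ρ q) :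
    (WithLp.toLp 2 (fun j => max (p j) 0) : EuclideanSpace ℝ (Fin d)) ∈
      {z : EuclideanSpace ℝ (Fin d) | ∀ q, ⟪z, q⟫ ≤ ρ q} := by
  intro q
  set r : EuclideanSpace ℝ (Fin d) := WithLp.toLp 2 (fun j => if 0 ≤ p j ∧ 0 ≤ q j then q j else 0) with hr
  have hρ : ρ r ≤ ρ q := by
    apply hmono
    intro j
    by_cases h : 0 ≤ p j ∧ 0 ≤ q j
    · left; simp only [hr, PiLp.toLp_apply]; rw [if_pos h]; exact ⟨h.2, le_refl _⟩
    · rcases le_total 0 (q j) with hq | hq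
      · left; simp only [hr, PiLp.toLp_apply]; rw [if_neg h]; exact ⟨le_refl _, hq⟩
      · right; simp only [hr, PiLp.toLp_apply]; rw [if_neg h]; exact ⟨hq, rfl⟩
  have hpr : ⟪p, r⟫ ≤ ρ r := hp r
  refine le_trans ?_ (hpr.trans hρ)
  simp only [PiLp.inner_apply, RCLike.inner_apply, conj_trivial]
  apply Finset.sum_le_sum
  intro j _
  by_cases h : 0 ≤ p j ∧ 0 ≤ q j
  · simp only [hr, PiLp.toLp_apply]; rw [if_pos h, max_eq_left h.1]
  · have h0 : r j * p j = 0 := by simp only [hr, PiLp.toLp_apply]; rw [if_neg h]; ring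
    rw [h0]
    rcases le_or_gt (p j) 0 with hpj | hpj
    · simp [max_eq_right hpj]
    · have hq : q j ≤ 0 := by
        by_contra hq
        exact h ⟨hpj.le, le_of_not_ge hq⟩
      exact mul_nonpos_of_nonpos_of_nonneg hq (le_max_right _ _)
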